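/- Let X and Y be finite sets, μ a probability measure on X with μ(x) > 0 for all x, ν a probability measure on Y with ν(y) > 0 for all y, and R : X × Y → [0,∞) with Σ_y R(x,y) > 0 for every x and Σ_x R(x,y) > 0 for every y (R need not have total mass 1). Let μ̄(x) = Σ_y R(x,y) be the X-marginal of R. Let (φ_n)_{n≥0} be the Sinkhorn iterates φ_{n+1} = ((φ_n)⁺)⁻ starting from φ₀ ≡ 0, with Y-marginals ρ_n(y) = Σ_x e^{φ_n(y) − (φ_n)⁺(x)} R(x,y). Then for every coupling π ∈ Π(μ,ν) absolutely continuous with respect to R and every n ≥ 1, H(ρ_n|ν) ≤ ( H(π|R) − H(μ|μ̄) )/n, where H(μ|μ̄) = Σ_x μ(x) ln( μ(x)/μ̄(x) ). In particular H(ρ_n|ν) ≤ ( H*(μ,ν,R) + ln(Σ_{x,y} R(x,y)) )/n, where H*(μ,ν,R) = inf_{π∈Π(μ,ν)} H(π|R). -/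

import Mathlib

open scoped BigOperators

/-- The `+`-transform: `φ⁺(x) = ln( Σ_y e^{φ(y)} R(x,y) / μ(x) )`. -/
noncomputable def plusT {X Y : Type*} [Fintype Y] (μ : X → ℝ) (R : X → Y → ℝ)
    (φ : Y → ℝ) (x : X) : ℝ :=
  Real.log ((∑ y, Real.exp (φ y) * R x y) / μ x)

/-- The `−`-transform: `ψ⁻(y) = −ln( Σ_x e^{−ψ(x)} R(x,y) / ν(y) )`. -/
noncomputable def minusT {X Y : Type*} [Fintype X] (ν : Y → ℝ) (R : X → Y → ℝ)
    (ψ : X → ℝ) (y : Y) : ℝ :=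
  -Real.log ((∑ x, Real.exp (-ψ x) * R x y) / ν y)

/-- The coupling `π(φ)(x,y) = e^{φ(y) − φ⁺(x)} R(x,y)`. -/
noncomputable def coupling {X Y : Type*} [Fintype Y] (μ : X → ℝ) (R : X → Y → ℝ)
    (φ : Y → ℝ) (x : X) (y : Y) : ℝ :=
  Real.exp (φ y - plusT μ R φ x) * R x y

/-- Log-sum inequality. -/
lemma log_sum_ineq {ι : Type*} [Fintype ι] (a b : ι → ℝ) (ha : ∀ i, 0 ≤ a i)
    (hb : ∀ i, 0 ≤ b i) (hab : ∀ i, b i = 0 → a i = 0) :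
    (∑ i, a i) * Real.log ((∑ i, a i) / ∑ i, b i) ≤ ∑ i, a i * Real.log (a i / b i) := by
  by_cases hSa : ∑ i, a i = 0
  · have h0 : ∀ i ∈ Finset.univ, a i = 0 :=
      (Finset.sum_eq_zero_iff_of_nonneg (fun i _ => ha i)).1 hSa
    rw [hSa, zero_mul]
    exact le_of_eq (Finset.sum_eq_zero fun i hi => by rw [h0 i hi, zero_mul]).symm
  · have hSa' : 0 < ∑ i, a i :=
      lt_of_le_of_ne (Finset.sum_nonneg fun i _ => ha i) (Ne.symm hSa)
    obtain ⟨i0, hi0⟩ : ∃ i, a i ≠ 0 := by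
      by_contra h; push_neg at h; exact hSa (Finset.sum_eq_zero fun i _ => h i)
    have hb0 : 0 < b i0 := lt_of_le_of_ne (hb i0) (fun h => hi0 (hab i0 h.symm))
    have hSb : 0 < ∑ i, b i :=
      Finset.sum_pos' (fun i _ => hb i) ⟨i0, Finset.mem_univ i0, hb0⟩
    set Sa := ∑ i, a i with hSadef
    set Sb := ∑ i, b i with hSbdef
    have key : ∀ i, a i - b i * (Sa / Sb) ≤
        a i * (Real.log (a i / b i) - Real.log (Sa / Sb)) := by
      intro i
      by_cases hai : a i = 0
      · rw [hai, zero_mul]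
        have : 0 ≤ b i * (Sa / Sb) := mul_nonneg (hb i) (div_nonneg hSa'.le hSb.le)
        linarith
      · have hap : 0 < a i := lt_of_le_of_ne (ha i) (Ne.symm hai)
        have hbp : 0 < b i := lt_of_le_of_ne (hb i) (fun h => hai (hab i h.symm))
        have hx : 0 < b i * Sa / (a i * Sb) := div_pos (mul_pos hbp hSa') (mul_pos hap hSb)
        have hlog := Real.log_le_sub_one_of_pos hx
        have hexpand : Real.log (b i * Sa / (a i * Sb)) =
            -(Real.log (a i / b i) - Real.log (Sa / Sb)) := by
          rw [Real.log_div (mul_pos hbp hSa').ne' (mul_pos hap hSb).ne',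
            Real.log_mul hbp.ne' hSa'.ne', Real.log_mul hap.ne' hSb.ne',
            Real.log_div hap.ne' hbp.ne', Real.log_div hSa'.ne' hSb.ne']
          ring
        rw [hexpand] at hlog
        have h2 : a i * (1 - b i * Sa / (a i * Sb)) ≤
            a i * (Real.log (a i / b i) - Real.log (Sa / Sb)) :=
          mul_le_mul_of_nonneg_left (by linarith) hap.le
        have h3 : a i * (1 - b i * Sa / (a i * Sb)) = a i - b i * (Sa / Sb) := by
          field_simp
        linarith
    have hsum := Finset.sum_le_sum (fun i (_ : i ∈ Finset.univ) => key i)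
    have hL : ∑ i, (a i - b i * (Sa / Sb)) = 0 := by
      rw [Finset.sum_sub_distrib, ← Finset.sum_mul, ← hSadef, ← hSbdef]
      field_simp
      ring
    have hRh : ∑ i, a i * (Real.log (a i / b i) - Real.log (Sa / Sb)) =
        (∑ i, a i * Real.log (a i / b i)) - Sa * Real.log (Sa / Sb) := by
      simp only [mul_sub]
      rw [Finset.sum_sub_distrib, ← Finset.sum_mul, ← hSadef]
    rw [hL, hRh] at hsum
    linarith

/-- sublinear rate for a general reference measure `R` (not
necessarily of mass 1). With `μ̄(x) = Σ_y R(x,y)` and Sinkhorn iterates started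
from `φ₀ ≡ 0`, for every coupling `π ∈ Π(μ,ν)` absolutely continuous w.r.t. `R`
and every `n ≥ 1`, `H(ρ_n|ν) ≤ (H(π|R) − H(μ|μ̄))/n`; in particular
`H(ρ_n|ν) ≤ (H(π|R) + ln(Σ R))/n`. -/
theorem sinkhorn_sublinear_rate_general {X Y : Type*} [Fintype X] [Fintype Y]
    (μ : X → ℝ) (ν : Y → ℝ) (R : X → Y → ℝ)
    (hμpos : ∀ x, 0 < μ x) (hμ : ∑ x, μ x = 1)
    (hνpos : ∀ y, 0 < ν y) (hν : ∑ y, ν y = 1)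
    (hR : ∀ x y, 0 ≤ R x y)
    (hrow : ∀ x, 0 < ∑ y, R x y) (hcol : ∀ y, 0 < ∑ x, R x y)
    (μbar : X → ℝ) (hμbar : ∀ x, μbar x = ∑ y, R x y)
    (φ : ℕ → Y → ℝ) (hφ0 : φ 0 = 0)
    (hiter : ∀ n, φ (n + 1) = minusT ν R (plusT μ R (φ n)))
    (ρ : ℕ → Y → ℝ) (hρ : ∀ n y, ρ n y = ∑ x, coupling μ R (φ n) x y) :
    ∀ π : X → Y → ℝ, (∀ x y, 0 ≤ π x y) →
      (∀ x, ∑ y, π x y = μ x) → (∀ y, ∑ x, π x y = ν y) →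
      (∀ x y, R x y = 0 → π x y = 0) →
      ∀ n : ℕ, 1 ≤ n →
        (∑ y, ρ n y * Real.log (ρ n y / ν y) ≤
            ((∑ x, ∑ y, π x y * Real.log (π x y / R x y)) -
              ∑ x, μ x * Real.log (μ x / μbar x)) / n) ∧
        (∑ y, ρ n y * Real.log (ρ n y / ν y) ≤
            ((∑ x, ∑ y, π x y * Real.log (π x y / R x y)) +
              Real.log (∑ x, ∑ y, R x y)) / n) := by
  intro π hπ0 hπX hπY habs n hn
  -- row/column positivity
  have hRne : ∀ x, ∃ y, 0 < R x y := by
    intro x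
    by_contra h; push_neg at h
    have : ∑ y, R x y = 0 := Finset.sum_eq_zero fun y _ => le_antisymm (h y) (hR x y)
    exact absurd this (hrow x).ne'
  have hRne' : ∀ y, ∃ x, 0 < R x y := by
    intro y
    by_contra h; push_neg at h
    have : ∑ x, R x y = 0 := Finset.sum_eq_zero fun x _ => le_antisymm (h x) (hR x y)
    exact absurd this (hcol y).ne'
  have hrowpos : ∀ (f : Y → ℝ) x, 0 < ∑ y, Real.exp (f y) * R x y := by
    intro f x
    obtain ⟨y, hy⟩ := hRne x
    exact Finset.sum_pos' (fun y _ => mul_nonneg (Real.exp_pos _).le (hR x y))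
      ⟨y, Finset.mem_univ y, mul_pos (Real.exp_pos _) hy⟩
  have hcolpos : ∀ (g : X → ℝ) y, 0 < ∑ x, Real.exp (g x) * R x y := by
    intro g y
    obtain ⟨x, hx⟩ := hRne' y
    exact Finset.sum_pos' (fun x _ => mul_nonneg (Real.exp_pos _).le (hR x y))
      ⟨x, Finset.mem_univ x, mul_pos (Real.exp_pos _) hx⟩
  -- exp of plusT
  have hplus : ∀ (f : Y → ℝ) x, ∑ y, Real.exp (f y) * R x y = μ x * Real.exp (plusT μ R f x) := by
    intro f x
    rw [plusT, Real.exp_log (div_pos (hrowpos f x) (hμpos x)),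
      mul_div_cancel₀ _ (hμpos x).ne']
  -- exp of minusT
  have hminus : ∀ n y, ∑ x, Real.exp (-(plusT μ R (φ n) x)) * R x y
      = ν y * Real.exp (-(φ (n+1) y)) := by
    intro n y
    rw [hiter n, minusT, neg_neg,
      Real.exp_log (div_pos (hcolpos _ y) (hνpos y)),
      mul_div_cancel₀ _ (hνpos y).ne']
  -- coupling row sums
  have hcouprow : ∀ (f : Y → ℝ) x, ∑ y, coupling μ R f x y = μ x := by
    intro f x
    have h1 : ∀ y, coupling μ R f x y
        = (Real.exp (f y) * R x y) * Real.exp (-(plusT μ R f x)) := by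
      intro y
      rw [coupling, Real.exp_sub, Real.exp_neg]
      ring
    rw [Finset.sum_congr rfl (fun y _ => h1 y), ← Finset.sum_mul, hplus f x,
      mul_assoc, ← Real.exp_add, add_neg_cancel, Real.exp_zero, mul_one]
  -- rho formula
  have hρeq : ∀ m y, ρ m y = ν y * Real.exp (φ m y - φ (m+1) y) := by
    intro m y
    have h1 : ∀ x, coupling μ R (φ m) x y
        = Real.exp (φ m y) * (Real.exp (-(plusT μ R (φ m) x)) * R x y) := by
      intro x
      rw [coupling, Real.exp_sub, Real.exp_neg]
      ring
    rw [hρ, Finset.sum_congr rfl (fun x _ => h1 x), ← Finset.mul_sum, hminus m y,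
      ← mul_assoc, mul_comm (Real.exp (φ m y)) (ν y), mul_assoc, ← Real.exp_add]
    ring_nf
  have hρpos : ∀ m y, 0 < ρ m y := by
    intro m y
    rw [hρeq m y]
    exact mul_pos (hνpos y) (Real.exp_pos _)
  have hρsum : ∀ m, ∑ y, ρ m y = 1 := by
    intro m
    calc ∑ y, ρ m y = ∑ y, ∑ x, coupling μ R (φ m) x y :=
          Finset.sum_congr rfl fun y _ => hρ m y
      _ = ∑ x, ∑ y, coupling μ R (φ m) x y := Finset.sum_comm
      _ = ∑ x, μ x := Finset.sum_congr rfl fun x _ => hcouprow (φ m) x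
      _ = 1 := hμ
  have hlogρ : ∀ m y, Real.log (ρ m y / ν y) = φ m y - φ (m+1) y := by
    intro m y
    rw [hρeq m y, mul_comm, mul_div_assoc, div_self (hνpos y).ne', mul_one, Real.log_exp]
  -- K1: one-step bound  H(ρ_{m+1}|ν) ≤ S m - S (m+1)
  have K1 : ∀ m, (∑ y, ρ (m+1) y * Real.log (ρ (m+1) y / ν y)) ≤
      (∑ x, μ x * plusT μ R (φ m) x) - (∑ x, μ x * plusT μ R (φ (m+1)) x) := by
    intro m
    have step : ∀ y, ρ (m+1) y * Real.log (ρ (m+1) y / ν y) ≤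
        ∑ x, coupling μ R (φ (m+1)) x y *
          (plusT μ R (φ m) x - plusT μ R (φ (m+1)) x) := by
      intro y
      have hbsum : ∑ x, Real.exp (φ (m+1) y - plusT μ R (φ m) x) * R x y = ν y := by
        have h1 : ∀ x, Real.exp (φ (m+1) y - plusT μ R (φ m) x) * R x y
            = Real.exp (φ (m+1) y) * (Real.exp (-(plusT μ R (φ m) x)) * R x y) := by
          intro x; rw [Real.exp_sub, Real.exp_neg]; ring
        rw [Finset.sum_congr rfl (fun x _ => h1 x), ← Finset.mul_sum, hminus m y,
          ← mul_assoc, mul_comm (Real.exp (φ (m+1) y)) (ν y), mul_assoc,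
          ← Real.exp_add, add_neg_cancel, Real.exp_zero, mul_one]
      have hls := log_sum_ineq (fun x => coupling μ R (φ (m+1)) x y)
        (fun x => Real.exp (φ (m+1) y - plusT μ R (φ m) x) * R x y)
        (fun x => mul_nonneg (Real.exp_pos _).le (hR x y))
        (fun x => mul_nonneg (Real.exp_pos _).le (hR x y))
        (fun x hx => by
          have hRx : R x y = 0 := by
            rcases mul_eq_zero.1 hx with h | h
            · exact absurd h (Real.exp_pos _).ne'
            · exact h
          simp [coupling, hRx])
      rw [hbsum, ← hρ (m+1) y] at hls
      refine hls.trans (le_of_eq (Finset.sum_congr rfl fun x _ => ?_))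
      by_cases hRxy : R x y = 0
      · simp [coupling, hRxy]
      · have hRp : 0 < R x y := lt_of_le_of_ne (hR x y) (Ne.symm hRxy)
        congr 1
        have hq : coupling μ R (φ (m+1)) x y /
            (Real.exp (φ (m+1) y - plusT μ R (φ m) x) * R x y)
            = Real.exp (plusT μ R (φ m) x - plusT μ R (φ (m+1)) x) := by
          rw [coupling, div_eq_iff (mul_pos (Real.exp_pos _) hRp).ne', ← mul_assoc,
            ← Real.exp_add]
          congr 2
          ring
        rw [hq, Real.log_exp]
    calc ∑ y, ρ (m+1) y * Real.log (ρ (m+1) y / ν y)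
        ≤ ∑ y, ∑ x, coupling μ R (φ (m+1)) x y *
            (plusT μ R (φ m) x - plusT μ R (φ (m+1)) x) :=
          Finset.sum_le_sum fun y _ => step y
      _ = ∑ x, ∑ y, coupling μ R (φ (m+1)) x y *
            (plusT μ R (φ m) x - plusT μ R (φ (m+1)) x) := Finset.sum_comm
      _ = ∑ x, μ x * (plusT μ R (φ m) x - plusT μ R (φ (m+1)) x) :=
          Finset.sum_congr rfl fun x _ => by
            rw [← Finset.sum_mul, hcouprow]
      _ = (∑ x, μ x * plusT μ R (φ m) x) - ∑ x, μ x * plusT μ R (φ (m+1)) x := by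
          simp only [mul_sub]
          rw [Finset.sum_sub_distrib]
  -- K2: S m - S (m+1) ≤ H(ρ_m|ν)
  have K2 : ∀ m, (∑ x, μ x * plusT μ R (φ m) x) - (∑ x, μ x * plusT μ R (φ (m+1)) x) ≤
      ∑ y, ρ m y * Real.log (ρ m y / ν y) := by
    intro m
    have step : ∀ x, μ x * (plusT μ R (φ m) x - plusT μ R (φ (m+1)) x) ≤
        ∑ y, coupling μ R (φ m) x y * Real.log (ρ m y / ν y) := by
      intro x
      have hbsum : ∑ y, Real.exp (φ (m+1) y - plusT μ R (φ m) x) * R x y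
          = μ x * Real.exp (plusT μ R (φ (m+1)) x - plusT μ R (φ m) x) := by
        have h1 : ∀ y, Real.exp (φ (m+1) y - plusT μ R (φ m) x) * R x y
            = (Real.exp (φ (m+1) y) * R x y) * Real.exp (-(plusT μ R (φ m) x)) := by
          intro y; rw [Real.exp_sub, Real.exp_neg]; ring
        rw [Finset.sum_congr rfl (fun y _ => h1 y), ← Finset.sum_mul,
          hplus (φ (m+1)) x, mul_assoc, ← Real.exp_add, ← sub_eq_add_neg]
      have hls := log_sum_ineq (fun y => coupling μ R (φ m) x y)
        (fun y => Real.exp (φ (m+1) y - plusT μ R (φ m) x) * R x y)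
        (fun y => mul_nonneg (Real.exp_pos _).le (hR x y))
        (fun y => mul_nonneg (Real.exp_pos _).le (hR x y))
        (fun y hy => by
          have hRx : R x y = 0 := by
            rcases mul_eq_zero.1 hy with h | h
            · exact absurd h (Real.exp_pos _).ne'
            · exact h
          simp [coupling, hRx])
      rw [hbsum, hcouprow (φ m) x] at hls
      have hcancel : Real.exp (plusT μ R (φ m) x - plusT μ R (φ (m+1)) x) *
          Real.exp (plusT μ R (φ (m+1)) x - plusT μ R (φ m) x) = 1 := by
        rw [← Real.exp_add, show (plusT μ R (φ m) x - plusT μ R (φ (m+1)) x) +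
          (plusT μ R (φ (m+1)) x - plusT μ R (φ m) x) = 0 by ring, Real.exp_zero]
      have hquot : μ x / (μ x * Real.exp (plusT μ R (φ (m+1)) x - plusT μ R (φ m) x))
          = Real.exp (plusT μ R (φ m) x - plusT μ R (φ (m+1)) x) := by
        rw [div_eq_iff (mul_pos (hμpos x) (Real.exp_pos _)).ne']
        linear_combination (-(μ x)) * hcancel
      rw [hquot, Real.log_exp] at hls
      refine hls.trans (le_of_eq (Finset.sum_congr rfl fun y _ => ?_))
      by_cases hRxy : R x y = 0
      · simp [coupling, hRxy]
      · have hRp : 0 < R x y := lt_of_le_of_ne (hR x y) (Ne.symm hRxy)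
        congr 1
        have hq : coupling μ R (φ m) x y /
            (Real.exp (φ (m+1) y - plusT μ R (φ m) x) * R x y)
            = Real.exp (φ m y - φ (m+1) y) := by
          rw [coupling, div_eq_iff (mul_pos (Real.exp_pos _) hRp).ne', ← mul_assoc,
            ← Real.exp_add]
          congr 2
          ring
        rw [hq, Real.log_exp, hlogρ m y]
    calc (∑ x, μ x * plusT μ R (φ m) x) - ∑ x, μ x * plusT μ R (φ (m+1)) x
        = ∑ x, μ x * (plusT μ R (φ m) x - plusT μ R (φ (m+1)) x) := by
          simp only [mul_sub]
          rw [Finset.sum_sub_distrib]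
      _ ≤ ∑ x, ∑ y, coupling μ R (φ m) x y * Real.log (ρ m y / ν y) :=
          Finset.sum_le_sum fun x _ => step x
      _ = ∑ y, ∑ x, coupling μ R (φ m) x y * Real.log (ρ m y / ν y) := Finset.sum_comm
      _ = ∑ y, ρ m y * Real.log (ρ m y / ν y) :=
          Finset.sum_congr rfl fun y _ => by rw [← Finset.sum_mul, ← hρ m y]
  -- K3: nonnegativity of dual potential sums
  have K3 : ∀ m, 0 ≤ ∑ y, ν y * φ m y := by
    intro m
    induction m with
    | zero => simp [hφ0]
    | succ k ih =>
      have h1 : ∑ y, ν y * φ (k+1) y =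
          (∑ y, ν y * φ k y) + ∑ y, ν y * Real.log (ν y / ρ k y) := by
        rw [← Finset.sum_add_distrib]
        refine Finset.sum_congr rfl fun y _ => ?_
        have h2 : Real.log (ν y / ρ k y) = -(Real.log (ρ k y / ν y)) := by
          rw [← Real.log_inv, inv_div]
        rw [h2, hlogρ k y]
        ring
      have h2 : 0 ≤ ∑ y, ν y * Real.log (ν y / ρ k y) := by
        have hls := log_sum_ineq (fun y => ν y) (fun y => ρ k y)
          (fun y => (hνpos y).le) (fun y => (hρpos k y).le)
          (fun y h => absurd h (hρpos k y).ne')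
        rw [hν, hρsum k] at hls
        simpa using hls
      linarith
  -- K4: duality bound
  have K4 : ∀ m, (∑ y, ν y * φ m y) - (∑ x, μ x * plusT μ R (φ m) x) ≤
      ∑ x, ∑ y, π x y * Real.log (π x y / R x y) := by
    intro m
    have hls := log_sum_ineq (fun p : X × Y => π p.1 p.2)
      (fun p : X × Y => coupling μ R (φ m) p.1 p.2)
      (fun p => hπ0 p.1 p.2)
      (fun p => mul_nonneg (Real.exp_pos _).le (hR p.1 p.2))
      (fun p hp => by
        have hRx : R p.1 p.2 = 0 := by
          rcases mul_eq_zero.1 hp with h | h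
          · exact absurd h (Real.exp_pos _).ne'
          · exact h
        exact habs p.1 p.2 hRx)
    have hsa : ∑ p : X × Y, π p.1 p.2 = 1 := by
      rw [Fintype.sum_prod_type]
      rw [Finset.sum_congr rfl fun x _ => hπX x, hμ]
    have hsb : ∑ p : X × Y, coupling μ R (φ m) p.1 p.2 = 1 := by
      rw [Fintype.sum_prod_type]
      rw [Finset.sum_congr rfl fun x _ => hcouprow (φ m) x, hμ]
    rw [hsa, hsb] at hls
    simp only [div_one, Real.log_one, one_mul] at hls
    -- rewrite the RHS of hls
    have hterm : ∀ x y, π x y * Real.log (π x y / coupling μ R (φ m) x y)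
        = π x y * Real.log (π x y / R x y)
          - π x y * φ m y + π x y * plusT μ R (φ m) x := by
      intro x y
      by_cases hπxy : π x y = 0
      · simp [hπxy]
      · have hπp : 0 < π x y := lt_of_le_of_ne (hπ0 x y) (Ne.symm hπxy)
        have hRp : 0 < R x y := by
          rcases lt_or_eq_of_le (hR x y) with h | h
          · exact h
          · exact absurd (habs x y h.symm) hπxy
        have hcp : 0 < coupling μ R (φ m) x y :=
          mul_pos (Real.exp_pos _) hRp
        rw [Real.log_div hπp.ne' hcp.ne', coupling,
          Real.log_mul (Real.exp_pos _).ne' hRp.ne', Real.log_exp,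
          Real.log_div hπp.ne' hRp.ne']
        ring
    have hRHS : ∑ p : X × Y, π p.1 p.2 *
        Real.log (π p.1 p.2 / coupling μ R (φ m) p.1 p.2)
        = (∑ x, ∑ y, π x y * Real.log (π x y / R x y))
          - (∑ y, ν y * φ m y) + ∑ x, μ x * plusT μ R (φ m) x := by
      rw [Fintype.sum_prod_type]
      have h1 : ∀ x, ∑ y, π x y * Real.log (π x y / coupling μ R (φ m) x y)
          = (∑ y, π x y * Real.log (π x y / R x y))
            - (∑ y, π x y * φ m y) + plusT μ R (φ m) x * ∑ y, π x y := by
        intro x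
        rw [Finset.sum_congr rfl fun y _ => hterm x y]
        rw [Finset.mul_sum]
        rw [Finset.sum_add_distrib, Finset.sum_sub_distrib]
        congr 1
        refine Finset.sum_congr rfl fun y _ => ?_
        ring
      rw [Finset.sum_congr rfl fun x _ => h1 x]
      rw [Finset.sum_add_distrib, Finset.sum_sub_distrib]
      congr 1
      · congr 1
        rw [← Finset.sum_comm]
        refine Finset.sum_congr rfl fun y _ => ?_
        rw [← Finset.sum_mul, hπY y]
      · refine Finset.sum_congr rfl fun x _ => ?_
        rw [hπX x]
        ring
    rw [hRHS] at hls
    linarith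
  -- telescoping induction
  have hmain : ∀ m : ℕ, 1 ≤ m → (m : ℝ) * (∑ y, ρ m y * Real.log (ρ m y / ν y)) ≤
      (∑ x, μ x * plusT μ R (φ 0) x) - (∑ x, μ x * plusT μ R (φ m) x) := by
    intro m hm
    induction m with
    | zero => omega
    | succ k ih =>
      by_cases hk : k = 0
      · subst hk
        have := K1 0
        push_cast
        linarith
      · have hk1 : 1 ≤ k := Nat.one_le_iff_ne_zero.2 hk
        have ihk := ih hk1
        have h1 := K1 k
        have h2 := K2 k
        have hkc : (0:ℝ) ≤ (k:ℝ) := Nat.cast_nonneg k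
        have hmono : (k:ℝ) * (∑ y, ρ (k+1) y * Real.log (ρ (k+1) y / ν y)) ≤
            (k:ℝ) * (∑ y, ρ k y * Real.log (ρ k y / ν y)) :=
          mul_le_mul_of_nonneg_left (h1.trans h2) hkc
        have hexp : ((k:ℝ) + 1) * (∑ y, ρ (k+1) y * Real.log (ρ (k+1) y / ν y))
            = (k:ℝ) * (∑ y, ρ (k+1) y * Real.log (ρ (k+1) y / ν y))
              + ∑ y, ρ (k+1) y * Real.log (ρ (k+1) y / ν y) := by ring
        push_cast
        push_cast at ihk
        linarith
  -- value of S 0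
  have hμbarpos : ∀ x, 0 < μbar x := fun x => by rw [hμbar x]; exact hrow x
  have hS0 : ∑ x, μ x * plusT μ R (φ 0) x
      = -∑ x, μ x * Real.log (μ x / μbar x) := by
    rw [← Finset.sum_neg_distrib]
    refine Finset.sum_congr rfl fun x _ => ?_
    have h1 : plusT μ R (φ 0) x = Real.log (μbar x / μ x) := by
      rw [hφ0, plusT, hμbar x]
      simp
    rw [h1]
    have h2 : Real.log (μbar x / μ x) = -(Real.log (μ x / μbar x)) := by
      rw [← Real.log_inv, inv_div]
    rw [h2]
    ring
  -- combine
  have hSn : -(∑ x, μ x * plusT μ R (φ n) x) ≤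
      ∑ x, ∑ y, π x y * Real.log (π x y / R x y) := by
    have h1 := K4 n
    have h2 := K3 n
    linarith
  have hnpos : (0:ℝ) < (n:ℝ) := by exact_mod_cast Nat.pos_of_ne_zero (by omega)
  have hfirst : (n:ℝ) * (∑ y, ρ n y * Real.log (ρ n y / ν y)) ≤
      (∑ x, ∑ y, π x y * Real.log (π x y / R x y))
        - ∑ x, μ x * Real.log (μ x / μbar x) := by
    have h := hmain n hn
    rw [hS0] at h
    linarith
  have goal1 : ∑ y, ρ n y * Real.log (ρ n y / ν y) ≤
      ((∑ x, ∑ y, π x y * Real.log (π x y / R x y)) -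
        ∑ x, μ x * Real.log (μ x / μbar x)) / n := by
    rw [le_div_iff₀ hnpos, mul_comm]
    exact hfirst
  -- second bound
  have hlogsum : -(∑ x, μ x * Real.log (μ x / μbar x)) ≤ Real.log (∑ x, ∑ y, R x y) := by
    have hls := log_sum_ineq (fun x => μ x) (fun x => μbar x)
      (fun x => (hμpos x).le) (fun x => (hμbarpos x).le)
      (fun x h => absurd h (hμbarpos x).ne')
    rw [hμ] at hls
    have hSb : ∑ x, μbar x = ∑ x, ∑ y, R x y :=
      Finset.sum_congr rfl fun x _ => hμbar x
    rw [hSb, one_mul, one_div, Real.log_inv] at hls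
    linarith
  have goal2 : ∑ y, ρ n y * Real.log (ρ n y / ν y) ≤
      ((∑ x, ∑ y, π x y * Real.log (π x y / R x y)) +
        Real.log (∑ x, ∑ y, R x y)) / n := by
    refine goal1.trans ?_
    have hsub : (∑ x, ∑ y, π x y * Real.log (π x y / R x y)) -
        ∑ x, μ x * Real.log (μ x / μbar x) ≤
        (∑ x, ∑ y, π x y * Real.log (π x y / R x y)) +
        Real.log (∑ x, ∑ y, R x y) := by linarith
    exact div_le_div_of_nonneg_right hsub hnpos.le
  exact ⟨goal1, goal2⟩
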